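/- Let N ≥ 1, a ∈ K nonzero, b ∈ K with b not a nonpositive integer. Define λ_j = a/(j/N + b) if N divides j and j ≥ 1, λ_0 = λ arbitrary, and λ_j = 0 otherwise. Then for all j,k ≥ 1: (j·λ_k − k·λ_j)·λ_{j+k} = (j−k)·λ_j·λ_k. -/
import Mathlib


theorem stmt_7 (K : Type*) [Field K] [CharZero K] (N : ℕ) (hN : 1 ≤ N)
    (a b lam : K) (ha : a ≠ 0) (hb : ∀ n : ℕ, b ≠ -(n : K))
    (lamSeq : ℕ → K) (h0 : lamSeq 0 = lam)
    (hdvd : ∀ j : ℕ, 1 ≤ j → N ∣ j → lamSeq j = a / (((j / N : ℕ) : K) + b))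
    (hother : ∀ j : ℕ, 1 ≤ j → ¬ N ∣ j → lamSeq j = 0) :
    ∀ j k : ℕ, 1 ≤ j → 1 ≤ k →
      ((j : K) * lamSeq k - (k : K) * lamSeq j) * lamSeq (j + k)
        = ((j : K) - (k : K)) * lamSeq j * lamSeq k := by
  have hne : ∀ n : ℕ, (n : K) + b ≠ 0 := by
    intro n h
    exact hb n (by linear_combination h)
  intro j k hj hk
  have hjk : 1 ≤ j + k := le_trans hj (Nat.le_add_right _ _)
  by_cases hNj : N ∣ j
  · by_cases hNk : N ∣ k
    · obtain ⟨p, hp⟩ := id hNj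
      obtain ⟨q, hq⟩ := id hNk
      have hNjk : N ∣ (j + k) := ⟨p + q, by rw [hp, hq, Nat.mul_add]⟩
      rw [hdvd j hj hNj, hdvd k hk hNk, hdvd (j + k) hjk hNjk]
      have h1 : j / N = p := by subst hp; exact Nat.mul_div_cancel_left p hN
      have h2 : k / N = q := by subst hq; exact Nat.mul_div_cancel_left q hN
      have h3 : (j + k) / N = p + q := by
        rw [hp, hq, ← Nat.mul_add, Nat.mul_div_cancel_left _ hN]
      rw [h1, h2, h3]
      have hcj : (j : K) = (N : K) * p := by exact_mod_cast congrArg (Nat.cast (R := K)) hp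
      have hck : (k : K) = (N : K) * q := by exact_mod_cast congrArg (Nat.cast (R := K)) hq
      have e1 := hne p
      have e2 := hne q
      have e3 : ((p + q : ℕ) : K) + b ≠ 0 := hne (p + q)
      push_cast at e3 ⊢
      field_simp
      rw [hcj, hck]
      ring
    · have hNjk : ¬ N ∣ (j + k) := fun h => hNk ((Nat.dvd_add_right hNj).mp h)
      rw [hother k hk hNk, hother (j + k) hjk hNjk]
      ring
  · rw [hother j hj hNj]
    by_cases hNk : N ∣ k
    · have hNjk : ¬ N ∣ (j + k) := fun h => hNj ((Nat.dvd_add_left hNk).mp h)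
      rw [hother (j + k) hjk hNjk]
      ring
    · rw [hother k hk hNk]
      ring
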